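/- In a spark complex, the group of degree-k spark classes with both vanishing curvature and vanishing divisor class is naturally isomorphic to H^k(F*)/H_I^k(F*), where H_I^k(F*) is the image of H^k(I*) in H^k(F*). -/

import Mathlib

section SparkMachinery

section SparkMachinery

variable (F : ℤ → Type) [∀ k, AddCommGroup (F k)]
  (d : ∀ k : ℤ, F k →+ F (k + 1))
  (E I : ∀ k : ℤ, AddSubgroup (F k))

/-- The group of homological sparks of degree `k+1`:
elements `a ∈ F^{k+1}` with `da = φ - r`, `φ ∈ E^{k+2}`, `r ∈ I^{k+2}`. -/
def sparkSub (k : ℤ) : AddSubgroup (F (k + 1)) where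
  carrier := {a | ∃ φ ∈ E (k + 1 + 1), ∃ r ∈ I (k + 1 + 1), d (k + 1) a = φ - r}
  zero_mem' := ⟨0, (E (k + 1 + 1)).zero_mem, 0, (I (k + 1 + 1)).zero_mem, by simp⟩
  add_mem' := by
    rintro a b ⟨φ, hφ, r, hr, ha⟩ ⟨ψ, hψ, t, ht, hb⟩
    exact ⟨φ + ψ, (E _).add_mem hφ hψ, r + t, (I _).add_mem hr ht, by
      simp only [map_add, ha, hb]; abel⟩
  neg_mem' := by
    rintro a ⟨φ, hφ, r, hr, ha⟩
    exact ⟨-φ, (E _).neg_mem hφ, -r, (I _).neg_mem hr, by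
      simp only [map_neg, ha]; abel⟩

/-- The subgroup of trivial sparks `db + s`, `b ∈ F^k`, `s ∈ I^{k+1}`. -/
def trivSub (k : ℤ) : AddSubgroup (F (k + 1)) where
  carrier := {a | ∃ b : F k, ∃ s ∈ I (k + 1), a = d k b + s}
  zero_mem' := ⟨0, 0, (I (k + 1)).zero_mem, by simp⟩
  add_mem' := by
    rintro a b ⟨c, s, hs, ha⟩ ⟨c', s', hs', hb⟩
    exact ⟨c + c', s + s', (I _).add_mem hs hs', by
      simp only [ha, hb, map_add]; abel⟩
  neg_mem' := by
    rintro a ⟨c, s, hs, ha⟩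
    exact ⟨-c, -s, (I _).neg_mem hs, by simp only [ha, map_neg]; abel⟩

/-- The group of spark classes of degree `k+1`: sparks modulo trivial sparks. -/
def SparkClasses (k : ℤ) :=
  sparkSub F d E I k ⧸ (trivSub F d I k).addSubgroupOf (sparkSub F d E I k)

instance (k : ℤ) : AddCommGroup (SparkClasses F d E I k) :=
  QuotientAddGroup.Quotient.addCommGroup _




/-- The cocycles of `F` in degree `k+1`. -/
def closedSub (k : ℤ) : AddSubgroup (F (k + 1)) where
  carrier := {a | d (k + 1) a = 0}
  zero_mem' := by simp
  add_mem' := by intro a b ha hb; simp only [Set.mem_setOf_eq, map_add] at *; simp [ha, hb]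
  neg_mem' := by intro a ha; simp only [Set.mem_setOf_eq, map_neg] at *; simp [ha]

/-- The subgroup `dF^k + Z^{k+1}(I)` of `F^{k+1}`: elements `db + s` with `s`
a cocycle of `I`.  Modding the cocycles of `F` by it yields
`H^{k+1}(F)/H_I^{k+1}(F)`, where `H_I^{k+1}(F)` is the image of `H^{k+1}(I)`
in `H^{k+1}(F)`. -/
def KSub (k : ℤ) : AddSubgroup (F (k + 1)) where
  carrier := {a | ∃ b : F k, ∃ s ∈ I (k + 1), d (k + 1) s = 0 ∧ a = d k b + s}
  zero_mem' := ⟨0, 0, (I _).zero_mem, by simp, by simp⟩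
  add_mem' := by
    rintro a b ⟨c, s, hs, hs0, ha⟩ ⟨c', s', hs', hs0', hb⟩
    exact ⟨c + c', s + s', (I _).add_mem hs hs', by simp [hs0, hs0'], by
      simp only [ha, hb, map_add]; abel⟩
  neg_mem' := by
    rintro a ⟨c, s, hs, hs0, ha⟩
    exact ⟨-c, -s, (I _).neg_mem hs, by simp [hs0], by simp only [ha, map_neg]; abel⟩

/-- `H^{k+1}(F)/H_I^{k+1}(F)`. -/
def HFmodHI (k : ℤ) :=
  closedSub F d k ⧸ (KSub F d I k).addSubgroupOf (closedSub F d k)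

instance (k : ℤ) : AddCommGroup (HFmodHI F d I k) :=
  QuotientAddGroup.Quotient.addCommGroup _

end SparkMachinery

/-- In a spark complex, the group of spark classes of degree
`k+1` with both vanishing curvature and vanishing divisor class is naturally
isomorphic to `H^{k+1}(F)/H_I^{k+1}(F)`, where `H_I^{k+1}(F)` is the image of
`H^{k+1}(I)` in `H^{k+1}(F)`.  (A class has vanishing curvature and divisor
class precisely when it is represented by a spark `a` with `da = 0 - r` where
`r` is a coboundary of `I`.) -/
theorem stmt_8
    (F : ℤ → Type) [∀ k, AddCommGroup (F k)]
    (d : ∀ k : ℤ, F k →+ F (k + 1))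
    (hdd : ∀ (k : ℤ) (x : F k), d (k + 1) (d k x) = 0)
    (E I : ∀ k : ℤ, AddSubgroup (F k))
    (hdE : ∀ (k : ℤ) (x : F k), x ∈ E k → d k x ∈ E (k + 1))
    (hdI : ∀ (k : ℤ) (x : F k), x ∈ I k → d k x ∈ I (k + 1))
    -- Axiom (A): the inclusion `E → F` induces an isomorphism on cohomology
    (hAinj : ∀ (j : ℤ) (e : F (j + 1)), e ∈ E (j + 1) → d (j + 1) e = 0 →
      (∃ y : F j, d j y = e) → ∃ y ∈ E j, d j y = e)
    (hAsurj : ∀ (j : ℤ) (x : F (j + 1)), d (j + 1) x = 0 →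
      ∃ e ∈ E (j + 1), d (j + 1) e = 0 ∧ ∃ y : F j, x - e = d j y)
    -- Axiom (B): `Eʲ ∩ Iʲ = 0` for `j ≥ 1`
    (hB : ∀ j : ℤ, 1 ≤ j → ∀ x : F j, x ∈ E j → x ∈ I j → x = 0)
    (k : ℤ) (hk : -1 ≤ k) :
    ∃ f : HFmodHI F d I k →+ SparkClasses F d E I k,
      (∀ (a : F (k + 1)) (h1 : a ∈ closedSub F d k)
        (h2 : a ∈ sparkSub F d E I k),
        f (QuotientAddGroup.mk ⟨a, h1⟩) = QuotientAddGroup.mk ⟨a, h2⟩) ∧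
      Function.Injective f ∧
      Set.range f =
        {c : SparkClasses F d E I k | ∃ (a : F (k + 1))
          (h2 : a ∈ sparkSub F d E I k) (r : F (k + 1 + 1)),
          r ∈ I (k + 1 + 1) ∧ (∃ t ∈ I (k + 1), d (k + 1) t = r) ∧
          d (k + 1) a = 0 - r ∧ c = QuotientAddGroup.mk ⟨a, h2⟩} := by
  classical
  have hsub : ∀ a : F (k + 1), a ∈ closedSub F d k → a ∈ sparkSub F d E I k := by
    intro a ha
    exact ⟨0, (E _).zero_mem, 0, (I _).zero_mem, by
      have ha' : d (k + 1) a = 0 := ha; simpa using ha'⟩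
  let j : closedSub F d k →+ sparkSub F d E I k :=
    { toFun := fun a => ⟨a.1, hsub a.1 a.2⟩
      map_zero' := rfl
      map_add' := fun _ _ => rfl }
  let ι : closedSub F d k →+ SparkClasses F d E I k :=
    (QuotientAddGroup.mk' _).comp j
  have hker : ∀ a ∈ (KSub F d I k).addSubgroupOf (closedSub F d k), ι a = 0 := by
    rintro ⟨a, ha⟩ h
    rw [AddSubgroup.mem_addSubgroupOf] at h
    obtain ⟨b, s, hs, hs0, hdecomp⟩ := h
    show QuotientAddGroup.mk _ = 0
    exact (QuotientAddGroup.eq_zero_iff _).mpr (by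
      rw [AddSubgroup.mem_addSubgroupOf]; exact ⟨b, s, hs, hdecomp⟩)
  refine ⟨QuotientAddGroup.lift _ ι (fun a ha => (AddMonoidHom.mem_ker).mpr (hker a ha)), ?_, ?_, ?_⟩
  · intro a h1 h2
    rfl
  · refine (injective_iff_map_eq_zero _).mpr ?_
    intro x
    induction x using QuotientAddGroup.induction_on with
    | H a =>
      intro hx
      obtain ⟨a, ha⟩ := a
      have : ((⟨a, hsub a ha⟩ : sparkSub F d E I k) : F (k + 1)) ∈ trivSub F d I k := by
        have := (QuotientAddGroup.eq_zero_iff _).mp hx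
        rwa [AddSubgroup.mem_addSubgroupOf] at this
      obtain ⟨b, s, hs, hdecomp⟩ := this
      refine (QuotientAddGroup.eq_zero_iff _).mpr ?_
      rw [AddSubgroup.mem_addSubgroupOf]
      refine ⟨b, s, hs, ?_, hdecomp⟩
      have hda : d (k + 1) a = 0 := ha
      have : d (k + 1) a = d (k + 1) (d k b) + d (k + 1) s := by
        rw [← map_add]; exact congrArg _ hdecomp
      rw [hda, hdd k b, zero_add] at this
      exact this.symm
  · ext c
    constructor
    · rintro ⟨x, rfl⟩
      induction x using QuotientAddGroup.induction_on with
      | H a =>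
        obtain ⟨a, ha⟩ := a
        refine ⟨a, hsub a ha, 0, (I _).zero_mem, ⟨0, (I _).zero_mem, by simp⟩, by
          have ha' : d (k + 1) a = 0 := ha; simpa using ha', rfl⟩
    · rintro ⟨a, h2, r, hrI, ⟨t, htI, hdt⟩, hda, rfl⟩
      have hclosed : a + t ∈ closedSub F d k := by
        show d (k + 1) (a + t) = 0
        rw [map_add, hda, hdt]
        abel
      refine ⟨QuotientAddGroup.mk ⟨a + t, hclosed⟩, ?_⟩
      show QuotientAddGroup.mk (⟨a + t, hsub _ hclosed⟩ : sparkSub F d E I k)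
          = QuotientAddGroup.mk (⟨a, h2⟩ : sparkSub F d E I k)
      rw [QuotientAddGroup.eq, AddSubgroup.mem_addSubgroupOf]
      refine ⟨0, -t, (I _).neg_mem htI, ?_⟩
      show -(a + t) + a = d k 0 + -t
      rw [map_zero]
      abel
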